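/- Let P be a monic irreducible polynomial in A = 𝔽_q[θ] of degree d. Then for all i ≥ 0: v_P(L_i) = ⌊i/d⌋ and v_P(D_i) = (q^i − q^{i − d⌊i/d⌋})/(q^d − 1), where v_P is the P-adic valuation, L_i = Π_{k=1}^i (θ − θ^{q^k}) and D_i = Π_{k=0}^{i-1} (θ^{q^i} − θ^{q^k}). -/

import Mathlib

open Polynomial

lemma aux_nat_dvd {q d n : ℕ} (hq : 2 ≤ q) (hd : 0 < d)
    (h : q ^ d - 1 ∣ q ^ n - 1) : d ∣ n := by
  have hdm := Nat.div_add_mod n d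
  have h1 : q ^ d - 1 ∣ q ^ (d * (n / d)) - 1 := by
    simpa [pow_mul] using Nat.sub_dvd_pow_sub_pow (q ^ d) 1 (n / d)
  have h2 : q ^ d - 1 ∣ q ^ n - q ^ (n % d) := by
    have : q ^ n - q ^ (n % d) = q ^ (n % d) * (q ^ (d * (n / d)) - 1) := by
      rw [Nat.mul_sub, mul_one, ← pow_add]
      congr 2
      omega
    rw [this]
    exact Dvd.dvd.mul_left h1 _
  have h3 : q ^ d - 1 ∣ q ^ (n % d) - 1 := by
    have e1 : 1 ≤ q ^ (n % d) := Nat.one_le_pow _ _ (by omega)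
    have e2 : q ^ (n % d) ≤ q ^ n := Nat.pow_le_pow_right (by omega) (Nat.mod_le n d)
    have := Nat.dvd_sub h h2
    have e3 : (q ^ n - 1) - (q ^ n - q ^ (n % d)) = q ^ (n % d) - 1 := by omega
    rwa [e3] at this
  have hlt : q ^ (n % d) - 1 < q ^ d - 1 := by
    have h4 : q ^ (n % d) < q ^ d := Nat.pow_lt_pow_right hq (Nat.mod_lt n hd)
    have h5 : 1 ≤ q ^ (n % d) := Nat.one_le_pow _ _ (by omega)
    omega
  have h0 : n % d = 0 := by
    by_contra hne
    have h6 : q ≤ q ^ (n % d) := by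
      calc q = q ^ 1 := (pow_one q).symm
      _ ≤ q ^ (n % d) := Nat.pow_le_pow_right (by omega) (by omega)
    have h7 : q ^ (n % d) - 1 ≠ 0 := by omega
    exact absurd (Nat.le_of_dvd (Nat.pos_of_ne_zero h7) h3) (by omega)
  exact Nat.dvd_of_mod_eq_zero h0

lemma aux_exact_mul {R : Type*} [CommRing R] [IsDomain R] {P x y : R} (hp : Prime P) {a b : ℕ}
    (hx : P ^ a ∣ x ∧ ¬ P ^ (a + 1) ∣ x) (hy : P ^ b ∣ y ∧ ¬ P ^ (b + 1) ∣ y) :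
    P ^ (a + b) ∣ x * y ∧ ¬ P ^ (a + b + 1) ∣ x * y := by
  obtain ⟨⟨x', rfl⟩, hx2⟩ := hx
  obtain ⟨⟨y', rfl⟩, hy2⟩ := hy
  have hpx : ¬ P ∣ x' := fun ⟨c, hc⟩ => hx2 ⟨c, by rw [hc]; ring⟩
  have hpy : ¬ P ∣ y' := fun ⟨c, hc⟩ => hy2 ⟨c, by rw [hc]; ring⟩
  constructor
  · exact ⟨x' * y', by ring⟩
  · rintro ⟨c, hc⟩
    have hPab : (P : R) ^ (a + b) ≠ 0 := pow_ne_zero _ hp.ne_zero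
    have hkey : x' * y' = P * c := by
      apply mul_left_cancel₀ hPab
      calc P ^ (a + b) * (x' * y') = P ^ a * x' * (P ^ b * y') := by ring
      _ = P ^ (a + b + 1) * c := hc
      _ = P ^ (a + b) * (P * c) := by ring
    rcases hp.dvd_or_dvd ⟨c, hkey⟩ with h | h
    · exact hpx h
    · exact hpy h

lemma aux_exact_pow {R : Type*} [CommRing R] [IsDomain R] {P x : R} (hp : Prime P) {a : ℕ}
    (hx : P ^ a ∣ x ∧ ¬ P ^ (a + 1) ∣ x) (n : ℕ) :
    P ^ (n * a) ∣ x ^ n ∧ ¬ P ^ (n * a + 1) ∣ x ^ n := by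
  induction n with
  | zero => simpa using hp.not_dvd_one
  | succ n ih =>
    have := aux_exact_mul hp ih hx
    rw [pow_succ]
    convert this using 3 <;> ring

lemma aux_T_succ {q d i : ℕ} (hq : 2 ≤ q) (hd : 0 < d) :
    (q ^ (i + 1) - q ^ ((i + 1) % d)) / (q ^ d - 1)
      = (if d ∣ (i + 1) then 1 else 0) + q * ((q ^ i - q ^ (i % d)) / (q ^ d - 1)) := by
  have hq2 : 2 ≤ q ^ d := le_trans hq (Nat.le_self_pow (by omega) q)
  have hqd : 0 < q ^ d - 1 := by omega
  have hdm := Nat.div_add_mod i d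
  have hdvd : q ^ d - 1 ∣ q ^ i - q ^ (i % d) := by
    have h1 : q ^ d - 1 ∣ q ^ (d * (i / d)) - 1 := by
      simpa [pow_mul] using Nat.sub_dvd_pow_sub_pow (q ^ d) 1 (i / d)
    have : q ^ i - q ^ (i % d) = q ^ (i % d) * (q ^ (d * (i / d)) - 1) := by
      rw [Nat.mul_sub, mul_one, ← pow_add]
      congr 2
      omega
    rw [this]
    exact Dvd.dvd.mul_left h1 _
  have hT := Nat.div_mul_cancel hdvd
  set T := (q ^ i - q ^ (i % d)) / (q ^ d - 1) with hTdef
  apply Nat.div_eq_of_eq_mul_left hqd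
  have hle : q ^ (i % d) ≤ q ^ i := Nat.pow_le_pow_right (by omega) (Nat.mod_le i d)
  have hone : 1 ≤ q ^ (i % d) := Nat.one_le_pow _ _ (by omega)
  by_cases hc : d ∣ (i + 1)
  · rw [if_pos hc]
    obtain ⟨m, hm⟩ := hc
    have hmod : i % d = d - 1 := by
      cases m with
      | zero => omega
      | succ m' =>
        have hi : i = d * m' + (d - 1) := by rw [Nat.mul_succ] at hm; omega
        rw [hi, Nat.mul_add_mod]
        exact Nat.mod_eq_of_lt (by omega)
    have hmod1 : (i + 1) % d = 0 := Nat.mod_eq_zero_of_dvd ⟨m, hm⟩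
    rw [hmod1, pow_zero]
    have hd1 : d ≤ i + 1 := Nat.le_of_dvd (by omega) ⟨m, hm⟩
    have hqmul : q * (q ^ i - q ^ (i % d)) = q ^ (i + 1) - q ^ d := by
      rw [Nat.mul_sub, hmod, ← pow_succ', ← pow_succ', Nat.sub_add_cancel hd]
    have hle2 : q ^ d ≤ q ^ (i + 1) := Nat.pow_le_pow_right (by omega) hd1
    calc q ^ (i + 1) - 1 = (q ^ d - 1) + (q ^ (i + 1) - q ^ d) := by omega
    _ = (q ^ d - 1) + q * (q ^ i - q ^ (i % d)) := by rw [hqmul]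
    _ = (q ^ d - 1) + q * (T * (q ^ d - 1)) := by rw [hT]
    _ = (1 + q * T) * (q ^ d - 1) := by ring
  · rw [if_neg hc]
    have hmod : (i + 1) % d = i % d + 1 := by
      have hlt : i % d + 1 < d := by
        rcases Nat.lt_or_ge (i % d + 1) d with h | h
        · exact h
        · exfalso
          have : i % d = d - 1 := by have := Nat.mod_lt i hd; omega
          exact hc ⟨i / d + 1, by rw [Nat.mul_add, Nat.mul_one]; omega⟩
      have hi1 : i + 1 = d * (i / d) + (i % d + 1) := by omega
      rw [hi1, Nat.mul_add_mod]
      exact Nat.mod_eq_of_lt hlt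
    rw [hmod]
    have hqmul : q * (q ^ i - q ^ (i % d)) = q ^ (i + 1) - q ^ (i % d + 1) := by
      rw [Nat.mul_sub, ← pow_succ', ← pow_succ']
    calc q ^ (i + 1) - q ^ (i % d + 1) = q * (q ^ i - q ^ (i % d)) := hqmul.symm
    _ = q * (T * (q ^ d - 1)) := by rw [hT]
    _ = (0 + q * T) * (q ^ d - 1) := by ring

lemma aux_sq (F : Type*) [Field F] [Fintype F] (P : Polynomial F)
    (hirr : Irreducible P) {n : ℕ} (hn : 0 < n) :
    ¬ P ^ 2 ∣ X ^ (Fintype.card F) ^ n - X := by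
  haveI : CharP F (ringChar F) := ringChar.charP F
  obtain ⟨s, hp, hcard⟩ := FiniteField.card F (ringChar F)
  have hdvd : ringChar F ∣ (Fintype.card F) ^ n := by
    rw [hcard, ← pow_mul]
    exact dvd_pow_self _ (by positivity)
  have hsep := galois_poly_separable (K := F) (ringChar F) ((Fintype.card F) ^ n) hdvd
  have hsq : Squarefree (X ^ (Fintype.card F) ^ n - X : F[X]) := hsep.squarefree
  intro h
  exact hirr.not_isUnit (hsq P (by rw [← pow_two]; exact h))


-- Frobenius on polynomials over a finite field
lemma aux_frob (F : Type*) [Field F] [Fintype F] (a b : F[X]) (k : ℕ) :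
    (a - b) ^ (Fintype.card F) ^ k = a ^ (Fintype.card F) ^ k - b ^ (Fintype.card F) ^ k := by
  haveI : CharP F (ringChar F) := ringChar.charP F
  obtain ⟨n, hp, hcard⟩ := FiniteField.card F (ringChar F)
  haveI : Fact (ringChar F).Prime := ⟨hp⟩
  rw [hcard, ← pow_mul]
  exact sub_pow_char_pow (p := ringChar F) a b (↑n * k)

-- key: P ∣ X^{q^n} - X ↔ d ∣ n
lemma aux_key_dvd (F : Type*) [Field F] [Fintype F] (P : Polynomial F)
    (hirr : Irreducible P) (n : ℕ) :
    P ∣ X ^ (Fintype.card F) ^ n - X ↔ P.natDegree ∣ n := by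
  classical
  haveI := Fact.mk hirr
  set q := Fintype.card F with hq
  set d := P.natDegree with hdd
  have hd : 0 < d := hirr.natDegree_pos
  have hq2 : 2 ≤ q := Fintype.one_lt_card
  set E := AdjoinRoot P with hE
  have hPne : P ≠ 0 := hirr.ne_zero
  haveI : FiniteDimensional F E := PowerBasis.finite (AdjoinRoot.powerBasis hPne)
  haveI : Finite E := Module.finite_of_finite F
  haveI : Fintype E := Fintype.ofFinite E
  have hcardE : Fintype.card E = q ^ d := by
    rw [Module.card_eq_pow_finrank (K := F) (V := E), PowerBasis.finrank (AdjoinRoot.powerBasis hPne),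
      AdjoinRoot.powerBasis_dim]
  set x : E := AdjoinRoot.root P with hx
  have hiff : P ∣ X ^ q ^ n - X ↔ x ^ q ^ n = x := by
    rw [← AdjoinRoot.mk_eq_zero, map_sub, map_pow, AdjoinRoot.mk_X, sub_eq_zero]
  rw [hiff]
  constructor
  · intro hxn
    -- all elements are fixed by the q^n-power map
    haveI : CharP E (ringChar F) := charP_of_injective_algebraMap (algebraMap F E).injective _
    obtain ⟨s, hp, hcard⟩ := FiniteField.card F (ringChar F)
    haveI : Fact (ringChar F).Prime := ⟨hp⟩
    have hall : ∀ y : E, y ^ q ^ n = y := by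
      have hS : ∀ y ∈ Algebra.adjoin F ({x} : Set E), y ^ q ^ n = y := by
        intro y hy
        induction hy using Algebra.adjoin_induction with
        | mem z hz => rw [Set.mem_singleton_iff] at hz; rw [hz]; exact hxn
        | algebraMap c =>
            rw [← map_pow]
            congr 1
            rw [hq]
            exact FiniteField.pow_card_pow n c
        | add a b _ _ ha hb =>
            have hqe : q ^ n = ringChar F ^ ((s : ℕ) * n) := by rw [hq, hcard, ← pow_mul]
            rw [hqe, add_pow_char_pow, ← hqe, ha, hb]
        | mul a b _ _ ha hb => rw [mul_pow, ha, hb]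
      intro y
      apply hS
      rw [AdjoinRoot.adjoinRoot_eq_top]
      trivial
    -- use cyclicity of units
    have hunits : ∀ g : Eˣ, g ^ (q ^ n - 1) = 1 := by
      intro g
      have h1 : (g : E) ^ q ^ n = g := hall g
      have hq1 : 1 ≤ q ^ n := Nat.one_le_pow _ _ (by omega)
      have h2 : (g : E) ^ (q ^ n - 1) * g = (1 : E) * g := by
        rw [one_mul, ← pow_succ]
        rw [Nat.sub_add_cancel hq1]
        exact h1
      have h3 : (g : E) ^ (q ^ n - 1) = 1 := by
        have := mul_right_cancel₀ (Units.ne_zero g) h2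
        exact this
      ext
      push_cast
      exact h3
    have hexp : Monoid.exponent Eˣ ∣ q ^ n - 1 := Monoid.exponent_dvd_of_forall_pow_eq_one hunits
    rw [IsCyclic.exponent_eq_card, Nat.card_eq_fintype_card, Fintype.card_units, hcardE] at hexp
    exact aux_nat_dvd hq2 hd hexp
  · rintro ⟨m, rfl⟩
    rw [pow_mul, ← hcardE]
    exact FiniteField.pow_card_pow m x


/-- **`P`-adic valuations of the Carlitz factorials.**
For `P` monic irreducible of degree `d` in `A = 𝔽_q[θ]`,
`v_P(L_i) = ⌊i/d⌋` and `v_P(D_i) = (q^i - q^{i mod d})/(q^d - 1)`, where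
`L_i = ∏_{k=1}^{i} (θ - θ^{q^k})` and `D_i = ∏_{k=0}^{i-1} (θ^{q^i} - θ^{q^k})`
(the valuation `v_P` being expressed by exact divisibility by powers of `P`). -/
theorem carlitz_factorial_padic_valuation
    (F : Type*) [Field F] [Fintype F] (q : ℕ) (hq : q = Fintype.card F)
    (P : Polynomial F) (hP : P.Monic) (hirr : Irreducible P)
    (L D : ℕ → Polynomial F)
    (hL : ∀ i : ℕ, L i = ∏ k ∈ Finset.range i, (X - X ^ q ^ (k + 1)))
    (hD : ∀ i : ℕ, D i = ∏ k ∈ Finset.range i, (X ^ q ^ i - X ^ q ^ k)) :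
    ∀ i : ℕ,
      (P ^ (i / P.natDegree) ∣ L i ∧ ¬ P ^ (i / P.natDegree + 1) ∣ L i) ∧
      (P ^ ((q ^ i - q ^ (i % P.natDegree)) / (q ^ P.natDegree - 1)) ∣ D i ∧
        ¬ P ^ ((q ^ i - q ^ (i % P.natDegree)) / (q ^ P.natDegree - 1) + 1) ∣ D i) := by
  subst hq
  set q := Fintype.card F with hq
  set d := P.natDegree with hd
  have hd0 : 0 < d := hirr.natDegree_pos
  have hq2 : 2 ≤ q := Fintype.one_lt_card
  have hprime : Prime P := hirr.prime
  have hfac : ∀ n : ℕ, 0 < n → P ^ (if d ∣ n then 1 else 0) ∣ (X ^ q ^ n - X : F[X]) ∧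
      ¬ P ^ ((if d ∣ n then 1 else 0) + 1) ∣ (X ^ q ^ n - X : F[X]) := by
    intro n hn
    by_cases hc : d ∣ n
    · rw [if_pos hc]
      constructor
      · rw [pow_one]
        exact (aux_key_dvd F P hirr n).mpr hc
      · have := aux_sq F P hirr hn
        norm_num
        exact this
    · rw [if_neg hc]
      constructor
      · simp
      · rw [zero_add, pow_one]
        intro h
        exact hc ((aux_key_dvd F P hirr n).mp h)
  intro i
  induction i with
  | zero =>
    have hL0 : L 0 = 1 := by simp [hL]
    have hD0 : D 0 = 1 := by simp [hD]
    rw [hL0, hD0]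
    have e1 : (0 : ℕ) / d = 0 := Nat.zero_div d
    have e2 : (q ^ 0 - q ^ (0 % d)) / (q ^ d - 1) = 0 := by simp
    rw [e1, e2]
    simp only [pow_zero, zero_add, pow_one]
    exact ⟨⟨one_dvd _, hprime.not_dvd_one⟩, one_dvd _, hprime.not_dvd_one⟩
  | succ i ih =>
    obtain ⟨⟨hL1, hL2⟩, hD1, hD2⟩ := ih
    have hfac1 := hfac (i + 1) (Nat.succ_pos i)
    have hfac2 : P ^ (if d ∣ (i + 1) then 1 else 0) ∣ (X - X ^ q ^ (i + 1) : F[X]) ∧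
        ¬ P ^ ((if d ∣ (i + 1) then 1 else 0) + 1) ∣ (X - X ^ q ^ (i + 1) : F[X]) := by
      have hneg : (X - X ^ q ^ (i + 1) : F[X]) = -(X ^ q ^ (i + 1) - X) := by ring
      rw [hneg]
      exact ⟨dvd_neg.mpr hfac1.1, fun h => hfac1.2 (dvd_neg.mp h)⟩
    constructor
    · have hLs : L (i + 1) = L i * (X - X ^ q ^ (i + 1)) := by
        rw [hL, hL, Finset.prod_range_succ]
      have hdiv : (i + 1) / d = i / d + (if d ∣ (i + 1) then 1 else 0) := Nat.succ_div (a := i) (b := d)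
      rw [hLs, hdiv]
      exact aux_exact_mul hprime ⟨hL1, hL2⟩ hfac2
    · have hDs : D (i + 1) = (X ^ q ^ (i + 1) - X) * (D i) ^ q := by
        rw [hD (i + 1), Finset.prod_range_succ', hD i, ← Finset.prod_pow, pow_zero, pow_one,
          mul_comm]
        congr 1
        apply Finset.prod_congr rfl
        intro k hk
        have hfr := aux_frob F (X ^ q ^ i) (X ^ q ^ k) 1
        rw [pow_one] at hfr
        rw [hfr, ← pow_mul, ← pow_mul, ← pow_succ, ← pow_succ]
      have hpow := aux_exact_pow hprime ⟨hD1, hD2⟩ q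
      have hmul := aux_exact_mul hprime hfac1 hpow
      rw [hDs, aux_T_succ hq2 hd0]
      exact hmul
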